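/- Let X be a complex normed space and let Y and Z be complementary closed subspaces of X (Y ∩ Z = {0} and Y + Z = X). Suppose there is a function Φ : ℝ × ℝ → ℝ such that ‖y + z‖ = Φ(‖y‖, ‖z‖) for all y ∈ Y and z ∈ Z. If the isometry group of X is algebraically reflexive, then the isometry group of Y (with the norm inherited from X) is algebraically reflexive too. -/

import Mathlib

/-- If X = Y ⊕ Z with ‖y + z‖ = Φ(‖y‖, ‖z‖) for all y ∈ Y, z ∈ Z, and the
isometry group of X is algebraically reflexive, then so is the isometry group of Y. -/
theorem isometry_group_of_summand_algebraically_reflexive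
    (X : Type*) [NormedAddCommGroup X] [NormedSpace ℂ X]
    (Y Z : Submodule ℂ X) (hYc : IsClosed (Y : Set X)) (hZc : IsClosed (Z : Set X))
    (hcompl : IsCompl Y Z)
    (Φ : ℝ × ℝ → ℝ) (hΦ : ∀ y ∈ Y, ∀ z ∈ Z, ‖y + z‖ = Φ (‖y‖, ‖z‖))
    (hX : ∀ T : X →L[ℂ] X, (∀ x : X, ∃ L : X ≃ₗᵢ[ℂ] X, T x = L x) → Function.Surjective T) :
    ∀ T : Y →L[ℂ] Y, (∀ y : Y, ∃ L : Y ≃ₗᵢ[ℂ] Y, T y = L y) → Function.Surjective T := by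
  intro T hT
  set p : X →ₗ[ℂ] Y := Y.linearProjOfIsCompl Z hcompl with hpdef
  have hq : ∀ x : X, x - (p x : X) ∈ Z := by
    intro x
    have h := Submodule.projection_add_projection_eq_self hcompl x
    have : x - (p x : X) = (Z.linearProjOfIsCompl Y hcompl.symm x : X) :=
      sub_eq_iff_eq_add.mpr (by rw [add_comm]; exact h.symm)
    rw [this]; exact (Z.linearProjOfIsCompl Y hcompl.symm x).2
  -- norm transfer: if two elements of Y have equal norms, adding the same z preserves norm
  have hnorm : ∀ (y y' : Y) (z : X), z ∈ Z → ‖y‖ = ‖y'‖ → ‖(y : X) + z‖ = ‖(y' : X) + z‖ := by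
    intro y y' z hz h
    have h' : ‖(y : X)‖ = ‖(y' : X)‖ := h
    rw [hΦ (y : X) y.2 z hz, hΦ (y' : X) y'.2 z hz, h']
  -- the projection onto Y is contractive
  have hYle : ∀ (y : Y) (z : X), z ∈ Z → ‖(y : X)‖ ≤ ‖(y : X) + z‖ := by
    intro y z hz
    have h1 : ‖(y : X) + z‖ = Φ (‖(y : X)‖, ‖z‖) := hΦ (y : X) y.2 z hz
    have h2 : ‖(y : X) - z‖ = Φ (‖(y : X)‖, ‖z‖) := by
      rw [sub_eq_add_neg, hΦ (y : X) y.2 (-z) (neg_mem hz), norm_neg]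
    have h3 : (2 : ℝ) * ‖(y : X)‖ = ‖((y : X) + z) + ((y : X) - z)‖ := by
      have : ((y : X) + z) + ((y : X) - z) = (2 : ℂ) • (y : X) := by
        rw [two_smul]; abel
      rw [this, norm_smul]
      simp
    have h4 : ‖((y : X) + z) + ((y : X) - z)‖ ≤ ‖(y : X) + z‖ + ‖(y : X) - z‖ :=
      norm_add_le _ _
    rw [h2, ← h1] at h4
    linarith [h3 ▸ h4]
  have hple : ∀ x : X, ‖(p x : X)‖ ≤ ‖x‖ := by
    intro x
    have := hYle (p x) (x - (p x : X)) (hq x)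
    simpa using this
  -- continuous projection
  let P : X →L[ℂ] Y := LinearMap.mkContinuous p 1 (fun x => by simpa using hple x)
  have hPapply : ∀ x : X, P x = p x := fun _ => rfl
  -- the extension of T to X
  let Tb : X →L[ℂ] X := Y.subtypeL.comp (T.comp P) +
    (ContinuousLinearMap.id ℂ X - Y.subtypeL.comp P)
  have hTb : ∀ x : X, Tb x = (T (p x) : X) + (x - (p x : X)) := by
    intro x; rfl
  -- projection computation lemmas
  have hp_left : ∀ y : Y, p (y : X) = y := fun y =>
    Submodule.linearProjOfIsCompl_apply_left hcompl y
  have hp_right : ∀ z : X, z ∈ Z → p z = 0 := fun z hz =>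
    Submodule.projectionOnto_apply_of_mem_right hcompl hz
  have hp_sum : ∀ (y : Y) (z : X), z ∈ Z → p ((y : X) + z) = y := by
    intro y z hz
    rw [map_add, hp_left, hp_right z hz, add_zero]
  -- Tb is a local surjective isometry
  have hTbloc : ∀ x : X, ∃ L : X ≃ₗᵢ[ℂ] X, Tb x = L x := by
    intro x
    obtain ⟨L, hL⟩ := hT (p x)
    -- extend L to X
    refine ⟨⟨LinearEquiv.ofLinear
      (Y.subtype ∘ₗ L.toLinearEquiv.toLinearMap ∘ₗ p + (LinearMap.id - Y.subtype ∘ₗ p))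
      (Y.subtype ∘ₗ L.symm.toLinearEquiv.toLinearMap ∘ₗ p + (LinearMap.id - Y.subtype ∘ₗ p))
      ?_ ?_, ?_⟩, ?_⟩
    · ext u
      simp only [LinearMap.comp_apply, LinearMap.add_apply, LinearMap.sub_apply,
        LinearMap.id_apply, Submodule.subtype_apply, LinearMap.id_coe, id_eq,
        LinearEquiv.coe_coe, LinearIsometryEquiv.coe_toLinearEquiv]
      have h1 : p ((L.symm (p u) : X) + (u - (p u : X))) = L.symm (p u) :=
        hp_sum (L.symm (p u)) _ (hq u)
      rw [h1, LinearIsometryEquiv.apply_symm_apply]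
      abel
    · ext u
      simp only [LinearMap.comp_apply, LinearMap.add_apply, LinearMap.sub_apply,
        LinearMap.id_apply, Submodule.subtype_apply, LinearMap.id_coe, id_eq,
        LinearEquiv.coe_coe, LinearIsometryEquiv.coe_toLinearEquiv]
      have h1 : p ((L (p u) : X) + (u - (p u : X))) = L (p u) :=
        hp_sum (L (p u)) _ (hq u)
      rw [h1, LinearIsometryEquiv.symm_apply_apply]
      abel
    · intro u
      simp only [LinearEquiv.ofLinear_apply, LinearMap.comp_apply, LinearMap.add_apply,
        LinearMap.sub_apply, LinearMap.id_apply, Submodule.subtype_apply,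
        LinearEquiv.coe_coe, LinearIsometryEquiv.coe_toLinearEquiv]
      rw [hnorm (L (p u)) (p u) _ (hq u) (L.norm_map (p u))]
      congr 1
      abel
    · simp only [LinearIsometryEquiv.coe_mk, LinearEquiv.ofLinear_apply, LinearMap.add_apply,
        LinearMap.comp_apply, LinearMap.sub_apply, LinearMap.id_apply, Submodule.subtype_apply,
        LinearEquiv.coe_coe, LinearIsometryEquiv.coe_toLinearEquiv]
      rw [hTb x, hL]
  -- apply reflexivity of X
  have hTbsurj := hX Tb hTbloc
  intro y0
  obtain ⟨x, hx⟩ := hTbsurj (y0 : X)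
  rw [hTb x] at hx
  -- the Z-component must vanish
  have hzY : x - (p x : X) ∈ Y := by
    have : x - (p x : X) = (y0 : X) - (T (p x) : X) := by
      rw [← hx]; abel
    rw [this]
    exact sub_mem y0.2 (T (p x)).2
  have hz0 : x - (p x : X) = 0 := by
    have := hcompl.disjoint
    rw [Submodule.disjoint_def] at this
    exact this _ hzY (hq x)
  refine ⟨p x, ?_⟩
  apply Subtype.ext
  rw [hz0, add_zero] at hx
  exact hx
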